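/- Let Δ ≥ 3 and set η = 2√((log Δ + 1)/Δ). For a graph G of maximum degree Δ, if each vertex is included in a set S independently with probability p₀ = 1/2 − η/2, then for each fixed vertex v, the probability that |Γ(v) ∩ S| > Δ/2 or |Γ(v) ∩ (V∖S)| > (1/2 + η)Δ is at most 2/(e²Δ²). -/

import Mathlib

open MeasureTheory ENNReal
open scoped Classical

lemma aux_hoeffding_mgf (p : ℝ) (hp0 : 0 ≤ p) (hp1 : p ≤ 1) (t : ℝ) :
    (1 - p) + p * Real.exp t ≤ Real.exp (p * t + t ^ 2 / 8) := by
  set D : ℝ → ℝ := fun x => (1 - p) + p * Real.exp x with hDdef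
  have hDpos : ∀ x, 0 < D x := by
    intro x
    rcases eq_or_lt_of_le hp0 with h | h
    · simp [hDdef, ← h]
    · have : 0 < p * Real.exp x := mul_pos h (Real.exp_pos x)
      have : 0 ≤ 1 - p := by linarith
      simp only [hDdef]; positivity
  have hD : ∀ x, HasDerivAt D (p * Real.exp x) x := by
    intro x
    exact ((Real.hasDerivAt_exp x).const_mul p).const_add (1 - p)
  set f : ℝ → ℝ := fun x => p * x + x ^ 2 / 8 - Real.log (D x) with hfdef
  set f' : ℝ → ℝ := fun x => p + x / 4 - p * Real.exp x / D x with hf'def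
  have hf : ∀ x, HasDerivAt f (f' x) x := by
    intro x
    have h1 : HasDerivAt (fun x : ℝ => p * x) p x := by
      simpa using (hasDerivAt_id x).const_mul p
    have h2 : HasDerivAt (fun x : ℝ => x ^ 2 / 8) (x / 4) x := by
      have := (hasDerivAt_pow 2 x).div_const 8
      refine this.congr_deriv ?_; push_cast; ring
    have h3 : HasDerivAt (fun x => Real.log (D x)) (p * Real.exp x / D x) x :=
      (hD x).log (hDpos x).ne'
    exact (h1.add h2).sub h3
  set f'' : ℝ → ℝ := fun x =>
    1 / 4 - (p * Real.exp x * D x - p * Real.exp x * (p * Real.exp x)) / D x ^ 2 with hf''def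
  have hf' : ∀ x, HasDerivAt f' (f'' x) x := by
    intro x
    have h1 : HasDerivAt (fun x : ℝ => p + x / 4) (1 / 4) x := by
      simpa using ((hasDerivAt_id x).div_const 4).const_add p
    have h2 : HasDerivAt (fun x => p * Real.exp x / D x)
        ((p * Real.exp x * D x - p * Real.exp x * (p * Real.exp x)) / D x ^ 2) x :=
      ((Real.hasDerivAt_exp x).const_mul p).div (hD x) (hDpos x).ne'
    exact h1.sub h2
  have hf''nonneg : ∀ x, 0 ≤ f'' x := by
    intro x
    have hnum : p * Real.exp x * D x - p * Real.exp x * (p * Real.exp x)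
        = (1 - p) * (p * Real.exp x) := by simp only [hDdef]; ring
    have hsq : 0 ≤ ((1 - p) - p * Real.exp x) ^ 2 := sq_nonneg _
    have h4 : 4 * ((1 - p) * (p * Real.exp x)) ≤ D x ^ 2 := by
      simp only [hDdef]; nlinarith [sq_nonneg ((1 - p) - p * Real.exp x)]
    have hD2 : 0 < D x ^ 2 := pow_pos (hDpos x) 2
    show 0 ≤ 1 / 4 - (p * Real.exp x * D x - p * Real.exp x * (p * Real.exp x)) / D x ^ 2
    rw [hnum, sub_nonneg, div_le_iff₀ hD2]
    linarith
  have hf'mono : Monotone f' :=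
    monotone_of_hasDerivAt_nonneg hf' hf''nonneg
  have hf'0 : f' 0 = 0 := by
    simp [hf'def, hDdef]
  have hf0 : f 0 = 0 := by
    simp [hfdef, hDdef]
  have hft : 0 ≤ f t := by
    rcases le_total 0 t with ht | ht
    · have hmono : MonotoneOn f (Set.Ici 0) := by
        apply monotoneOn_of_hasDerivWithinAt_nonneg (convex_Ici 0)
          (fun x _ => (hf x).continuousAt.continuousWithinAt)
          (fun x _ => (hf x).hasDerivWithinAt)
        intro x hx
        rw [interior_Ici] at hx
        have := hf'mono (le_of_lt hx)
        rw [hf'0] at this; exact this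
      have := hmono (Set.self_mem_Ici) (Set.mem_Ici.mpr ht) ht
      rw [hf0] at this; exact this
    · have hmono : AntitoneOn f (Set.Iic 0) := by
        apply antitoneOn_of_hasDerivWithinAt_nonpos (convex_Iic 0)
          (fun x _ => (hf x).continuousAt.continuousWithinAt)
          (fun x _ => (hf x).hasDerivWithinAt)
        intro x hx
        rw [interior_Iic] at hx
        have := hf'mono (le_of_lt hx)
        rw [hf'0] at this; exact this
      have := hmono (Set.mem_Iic.mpr ht) (Set.self_mem_Iic) ht
      rw [hf0] at this; exact this
  have hlog : Real.log (D t) ≤ p * t + t ^ 2 / 8 := by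
    have : 0 ≤ p * t + t ^ 2 / 8 - Real.log (D t) := hft
    linarith
  calc D t = Real.exp (Real.log (D t)) := (Real.exp_log (hDpos t)).symm
    _ ≤ Real.exp (p * t + t ^ 2 / 8) := Real.exp_le_exp.mpr hlog

lemma aux_chernoff_sum {V : Type*} [Fintype V] [DecidableEq V] (N : Finset V) (b : Bool)
    (w : Bool → ℝ) (hw : ∀ x, 0 ≤ w x) (hsum : w true + w false = 1)
    (m : ℕ) (l : ℝ) (hl : 0 ≤ l) :
    ∑ ω : V → Bool, (if m ≤ (N.filter fun u => ω u = b).card then ∏ u, w (ω u) else 0)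
      ≤ Real.exp (-(l * m)) * (w (!b) + w b * Real.exp l) ^ N.card := by
  set g : V → Bool → ℝ := fun u x => w x * (if u ∈ N ∧ x = b then Real.exp l else 1) with hg
  have key : ∀ ω : V → Bool,
      (if m ≤ (N.filter fun u => ω u = b).card then ∏ u, w (ω u) else 0)
        ≤ Real.exp (-(l * m)) * ∏ u, g u (ω u) := by
    intro ω
    have hprod : ∏ u, g u (ω u)
        = (∏ u, w (ω u)) * Real.exp l ^ (N.filter fun u => ω u = b).card := by
      rw [hg]
      rw [Finset.prod_mul_distrib]
      congr 1
      have : ∀ u : V, (if u ∈ N ∧ ω u = b then Real.exp l else 1)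
          = (if u ∈ N.filter (fun u => ω u = b) then Real.exp l else 1) := by
        intro u; simp [Finset.mem_filter]
      simp_rw [this]
      rw [Finset.prod_ite_mem, Finset.univ_inter, Finset.prod_const]
    have hwnn : 0 ≤ ∏ u, w (ω u) := Finset.prod_nonneg fun u _ => hw _
    split_ifs with hcond
    · rw [hprod]
      have h1 : 1 ≤ Real.exp (-(l * m)) * Real.exp l ^ (N.filter fun u => ω u = b).card := by
        rw [← Real.exp_nat_mul, ← Real.exp_add]
        apply Real.one_le_exp
        have hcast : (m:ℝ) ≤ ((N.filter fun u => ω u = b).card : ℝ) := Nat.cast_le.mpr hcond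
        nlinarith
      calc ∏ u, w (ω u) = (∏ u, w (ω u)) * 1 := by ring
        _ ≤ (∏ u, w (ω u)) * (Real.exp (-(l * m)) * Real.exp l ^ (N.filter fun u => ω u = b).card) :=
            by apply mul_le_mul_of_nonneg_left h1 hwnn
        _ = Real.exp (-(l * m)) * ((∏ u, w (ω u)) * Real.exp l ^ (N.filter fun u => ω u = b).card) := by ring
    · apply mul_nonneg (Real.exp_nonneg _)
      apply Finset.prod_nonneg
      intro u _
      apply mul_nonneg (hw _)
      split_ifs <;> [exact Real.exp_nonneg _; norm_num]
  calc ∑ ω : V → Bool, (if m ≤ (N.filter fun u => ω u = b).card then ∏ u, w (ω u) else 0)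
      ≤ ∑ ω : V → Bool, Real.exp (-(l * m)) * ∏ u, g u (ω u) :=
        Finset.sum_le_sum fun ω _ => key ω
    _ = Real.exp (-(l * m)) * ∑ ω : V → Bool, ∏ u, g u (ω u) := by
        rw [Finset.mul_sum]
    _ = Real.exp (-(l * m)) * ∏ u, (g u true + g u false) := by
        rw [← Fintype.prod_sum (fun u (x : Bool) => g u x)]
        congr 1
        apply Finset.prod_congr rfl
        intro u _
        rw [Fintype.sum_bool]
    _ ≤ Real.exp (-(l * m)) * (w (!b) + w b * Real.exp l) ^ N.card := by
        have : ∀ u : V, g u true + g u false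
            = if u ∈ N then (w (!b) + w b * Real.exp l) else 1 := by
          intro u
          rw [hg]
          cases b <;> split_ifs <;> simp_all <;> ring
        rw [Finset.prod_congr rfl fun u _ => this u, Finset.prod_ite_mem,
          Finset.univ_inter, Finset.prod_const]

lemma aux_chernoff_numeric (r : ℝ) (hr0 : 0 ≤ r) (hr1 : r ≤ 1) (n : ℕ) (hn : 1 ≤ n)
    (m : ℕ) (t : ℝ) (ht : 0 ≤ t) (hm : n * r + t ≤ m) :
    Real.exp (-(4 * t / n * m)) * ((1 - r) + r * Real.exp (4 * t / n)) ^ n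
      ≤ Real.exp (-(2 * t ^ 2 / n)) := by
  have hnpos : (0:ℝ) < n := by exact_mod_cast hn
  set l : ℝ := 4 * t / n with hl
  have hlnn : 0 ≤ l := by positivity
  have hbase : 0 ≤ (1 - r) + r * Real.exp l := by
    have : 0 ≤ r * Real.exp l := mul_nonneg hr0 (Real.exp_nonneg _)
    linarith
  have h1 : ((1 - r) + r * Real.exp l) ^ n ≤ Real.exp (r * l + l ^ 2 / 8) ^ n :=
    pow_le_pow_left₀ hbase (aux_hoeffding_mgf r hr0 hr1 l) n
  have h2 : Real.exp (r * l + l ^ 2 / 8) ^ n = Real.exp (n * (r * l + l ^ 2 / 8)) := by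
    rw [← Real.exp_nat_mul]
  calc Real.exp (-(l * m)) * ((1 - r) + r * Real.exp l) ^ n
      ≤ Real.exp (-(l * m)) * Real.exp (n * (r * l + l ^ 2 / 8)) := by
        rw [← h2]; exact mul_le_mul_of_nonneg_left h1 (Real.exp_nonneg _)
    _ = Real.exp (-(l * m) + n * (r * l + l ^ 2 / 8)) := (Real.exp_add _ _).symm
    _ ≤ Real.exp (-(2 * t ^ 2 / n)) := by
        apply Real.exp_le_exp.mpr
        have hlm : l * (n * r + t) ≤ l * m := mul_le_mul_of_nonneg_left hm hlnn
        have hkey : -(l * (n * r + t)) + n * (r * l + l ^ 2 / 8) = -(2 * t ^ 2 / n) := by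
          rw [hl]; field_simp; ring
        nlinarith

lemma aux_event_bound {V : Type*} [Fintype V] [DecidableEq V] (N : Finset V) (b : Bool)
    (w : Bool → ℝ) (hw : ∀ x, 0 ≤ w x) (hsum : w true + w false = 1)
    (m Δ : ℕ) (hΔ : 1 ≤ Δ) (hn : N.card ≤ Δ) (hm1 : 1 ≤ m) (t : ℝ) (ht : 0 ≤ t)
    (hm : (N.card : ℝ) * w b + t ≤ m) :
    ∑ ω : V → Bool, (if m ≤ (N.filter fun u => ω u = b).card then ∏ u, w (ω u) else 0)
      ≤ Real.exp (-(2 * t ^ 2 / Δ)) := by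
  rcases Nat.eq_zero_or_pos N.card with hn0 | hn1
  · have : ∀ ω : V → Bool,
        (if m ≤ (N.filter fun u => ω u = b).card then ∏ u, w (ω u) else 0) = 0 := by
      intro ω
      rw [if_neg]
      intro h
      have := Finset.card_le_card (Finset.filter_subset (fun u => ω u = b) N)
      omega
    rw [Finset.sum_congr rfl fun ω _ => this ω, Finset.sum_const, smul_zero]
    positivity
  · have hwb0 : 0 ≤ w b := hw b
    have hwb1 : w b ≤ 1 := by
      have h1 := hw true; have h2 := hw false
      cases b <;> simp_all <;> linarith
    have hnb : w (!b) = 1 - w b := by cases b <;> simp_all <;> linarith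
    have hnR : (0:ℝ) < N.card := by exact_mod_cast hn1
    have hΔR : (0:ℝ) < Δ := by exact_mod_cast hΔ
    calc ∑ ω : V → Bool, (if m ≤ (N.filter fun u => ω u = b).card then ∏ u, w (ω u) else 0)
        ≤ Real.exp (-(4 * t / N.card * m)) * (w (!b) + w b * Real.exp (4 * t / N.card)) ^ N.card :=
          aux_chernoff_sum N b w hw hsum m _ (by positivity)
      _ = Real.exp (-(4 * t / N.card * m))
            * ((1 - w b) + w b * Real.exp (4 * t / N.card)) ^ N.card := by rw [hnb]
      _ ≤ Real.exp (-(2 * t ^ 2 / N.card)) :=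
          aux_chernoff_numeric (w b) hwb0 hwb1 N.card hn1 m t ht hm
      _ ≤ Real.exp (-(2 * t ^ 2 / Δ)) := by
          apply Real.exp_le_exp.mpr
          rw [neg_le_neg_iff]
          apply div_le_div_of_nonneg_left (by positivity) hnR
          exact_mod_cast hn

lemma aux_measure_eq_sum {V : Type*} [Fintype V] [DecidableEq V]
    (r : ℝ≥0∞) (hp : r ≤ 1) (hp' : r.toNNReal ≤ 1) (E : Set (V → Bool)) [Fintype E] :
    ((Measure.pi fun _ : V => (PMF.bernoulli r.toNNReal hp').toMeasure) E).toReal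
      = ∑ ω ∈ E.toFinset, ∏ u, (cond (ω u) r (1 - r)).toReal := by
  classical
  set μ := Measure.pi fun _ : V => (PMF.bernoulli r.toNNReal hp').toMeasure with hμ
  have hsing : ∀ ω : V → Bool, μ {ω} = ∏ u, (cond (ω u) r (1 - r)) := by
    intro ω
    rw [show ({ω} : Set (V → Bool)) = Set.pi Set.univ (fun u => {ω u}) by
      rw [Set.univ_pi_singleton]]
    rw [hμ, Measure.pi_pi]
    apply Finset.prod_congr rfl
    intro u _
    rw [PMF.toMeasure_apply_singleton _ _ (measurableSet_singleton _)]
    rw [PMF.bernoulli_apply]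
    have hne := ne_top_of_le_ne_top ENNReal.one_ne_top hp
    cases ω u <;> simp [ENNReal.coe_sub, ENNReal.coe_toNNReal hne]
  have hE : E = ⋃ ω ∈ E.toFinset, ({ω} : Set (V → Bool)) := by
    simp [Set.biUnion_of_singleton]
  have hme : μ E = ∑ ω ∈ E.toFinset, μ {ω} := by
    conv_lhs => rw [hE]
    apply measure_biUnion_finset
    · intro a _ b _ hab
      simp [Set.disjoint_singleton, hab]
    · intro ω _
      exact measurableSet_singleton ω
  rw [hme]
  · rw [ENNReal.toReal_sum ?_]
    · have h1 : ∀ ω ∈ E.toFinset, (μ {ω}).toReal = ∏ u, (cond (ω u) r (1 - r)).toReal := by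
        intro ω _
        rw [hsing, ENNReal.toReal_prod]
      rw [Finset.sum_congr rfl h1]
    · intro ω _
      exact (measure_ne_top μ _)

/-- Chernoff bound for the random vertex partition. With `Δ ≥ 3`,
`η = 2√((log Δ + 1)/Δ)` and each vertex included in `S` independently with probability
`p₀ = 1/2 − η/2`, the probability that a fixed vertex `v` has `|Γ(v) ∩ S| > Δ/2` or
`|Γ(v) ∖ S| > (1/2 + η)Δ` is at most `2/(e²Δ²)`. -/
theorem stmt_10 {V : Type*} [Fintype V] [DecidableEq V]
    (G : SimpleGraph V) [DecidableRel G.Adj]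
    (Δ : ℕ) (hΔ : 3 ≤ Δ) (hdeg : ∀ v : V, G.degree v ≤ Δ)
    (η : ℝ) (hη : η = 2 * Real.sqrt ((Real.log Δ + 1) / Δ))
    (hp : ENNReal.ofReal (1 / 2 - η / 2) ≤ 1) (v : V) :
    ((Measure.pi fun _ : V => (PMF.bernoulli (ENNReal.ofReal (1 / 2 - η / 2)).toNNReal (le_trans (ENNReal.toNNReal_mono ENNReal.one_ne_top hp) (by simp))).toMeasure)
        {ω : V → Bool |
          ((Δ : ℝ) / 2 < (((G.neighborFinset v).filter fun u => ω u = true).card : ℝ)) ∨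
          ((1 / 2 + η) * Δ < (((G.neighborFinset v).filter fun u => ω u = false).card : ℝ))}
      ).toReal ≤ 2 / (Real.exp 2 * (Δ : ℝ) ^ 2) := by

  classical
  have hΔR : (0:ℝ) < Δ := by
    have : 0 < Δ := by omega
    exact_mod_cast this
  have hΔ1 : (1:ℝ) ≤ Δ := by
    have : 1 ≤ Δ := by omega
    exact_mod_cast this
  have hlog0 : 0 ≤ Real.log Δ := Real.log_nonneg hΔ1
  have hη0 : 0 ≤ η := by rw [hη]; positivity
  have hη2 : η ^ 2 = 4 * ((Real.log Δ + 1) / Δ) := by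
    rw [hη, mul_pow, Real.sq_sqrt (by positivity)]; ring
  set r : ℝ≥0∞ := ENNReal.ofReal (1 / 2 - η / 2) with hrdef
  set P : ℝ := r.toReal with hPdef
  have hP0 : 0 ≤ P := ENNReal.toReal_nonneg
  have hP1 : P ≤ 1 := by
    have := ENNReal.toReal_mono ENNReal.one_ne_top hp
    simpa using this
  set w : Bool → ℝ := fun b => cond b P (1 - P) with hwdef
  have hw : ∀ x : Bool, 0 ≤ w x := by
    intro x; cases x
    · show 0 ≤ 1 - P; linarith
    · exact hP0
  have hsum : w true + w false = 1 := by show P + (1 - P) = 1; ring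
  have hwt : ∀ x : Bool, (cond x r (1 - r)).toReal = w x := by
    intro x; cases x
    · show (1 - r).toReal = 1 - P
      rw [ENNReal.toReal_sub_of_le hp ENNReal.one_ne_top, ENNReal.toReal_one]
    · rfl
  set N := G.neighborFinset v with hN
  have hncard : N.card ≤ Δ := by
    rw [hN, SimpleGraph.card_neighborFinset_eq_degree]; exact hdeg v
  have hncardR : (N.card : ℝ) ≤ Δ := by exact_mod_cast hncard
  set m₁ : ℕ := Δ / 2 + 1 with hm₁def
  set m₂ : ℕ := ⌊(1/2 + η) * Δ⌋₊ + 1 with hm₂def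
  have hc1 : ∀ k : ℕ, ((Δ : ℝ) / 2 < (k:ℝ)) ↔ m₁ ≤ k := by
    intro k
    rw [div_lt_iff₀ (by norm_num : (0:ℝ) < 2)]
    rw [show ((Δ:ℝ) < (k:ℝ) * 2) ↔ (Δ < k * 2) from by exact_mod_cast Iff.rfl]
    omega
  have hc2 : ∀ k : ℕ, ((1/2 + η) * Δ < (k:ℝ)) ↔ m₂ ≤ k := by
    intro k
    rw [hm₂def, Nat.add_one_le_iff, Nat.floor_lt (by positivity)]
  set t : ℝ := η * Δ / 2 with htdef
  have ht0 : 0 ≤ t := by positivity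
  set f : (V → Bool) → ℝ := fun ω => ∏ u, w (ω u) with hfdef
  have hf0 : ∀ ω, 0 ≤ f ω := fun ω => Finset.prod_nonneg fun u _ => hw _
  have hterm : ∀ ω : V → Bool, (∏ u, (cond (ω u) r (1 - r)).toReal) = f ω :=
    fun ω => Finset.prod_congr rfl fun u _ => hwt (ω u)
  -- the final numeric value
  have hexpval : Real.exp (-(2 * t ^ 2 / Δ)) = 1 / (Real.exp 2 * (Δ:ℝ) ^ 2) := by
    have h1 : -(2 * t ^ 2 / Δ) = -(2 * Real.log Δ + 2) := by
      rw [htdef]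
      have : (η * Δ / 2) ^ 2 = η ^ 2 * Δ ^ 2 / 4 := by ring
      rw [this, hη2]
      field_simp
    rw [h1, Real.exp_neg, Real.exp_add]
    have h2 : Real.exp (2 * Real.log Δ) = (Δ:ℝ) ^ 2 := by
      rw [show (2:ℝ) * Real.log Δ = Real.log ((Δ:ℝ) ^ 2) from by
        rw [Real.log_pow]; push_cast; ring]
      exact Real.exp_log (by positivity)
    rw [h2, one_div, mul_comm (Real.exp 2)]
  -- bound for the second event
  have hq : 1 - P ≤ 1/2 + η/2 := by
    rcases le_or_gt 0 (1/2 - η/2) with h0 | h0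
    · have : P = 1/2 - η/2 := by rw [hPdef, hrdef, ENNReal.toReal_ofReal h0]
      rw [this]; ring_nf; linarith
    · have : r = 0 := by rw [hrdef]; exact ENNReal.ofReal_eq_zero.mpr (le_of_lt h0)
      have hP : P = 0 := by rw [hPdef, this]; rfl
      rw [hP]; linarith
  have hE2 : ∑ ω : V → Bool, (if m₂ ≤ (N.filter fun u => ω u = false).card then f ω else 0)
      ≤ Real.exp (-(2 * t ^ 2 / Δ)) := by
    apply aux_event_bound N false w hw hsum m₂ Δ (by omega) hncard (by omega) t ht0
    have hfl : w false = 1 - P := rfl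
    rw [hfl]
    have h1 : (N.card : ℝ) * (1 - P) ≤ (Δ:ℝ) * (1/2 + η/2) := by
      apply mul_le_mul hncardR hq (by linarith) (le_of_lt hΔR)
    have h2 : (1/2 + η) * Δ < (m₂ : ℝ) := by
      rw [hm₂def]; push_cast
      exact Nat.lt_floor_add_one _
    rw [htdef]; linarith
  have hE1 : ∑ ω : V → Bool, (if m₁ ≤ (N.filter fun u => ω u = true).card then f ω else 0)
      ≤ Real.exp (-(2 * t ^ 2 / Δ)) := by
    rcases le_or_gt 0 (1/2 - η/2) with h0 | h0
    · have hPval : P = 1/2 - η/2 := by rw [hPdef, hrdef, ENNReal.toReal_ofReal h0]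
      apply aux_event_bound N true w hw hsum m₁ Δ (by omega) hncard (by omega) t ht0
      have hwtr : w true = P := rfl
      rw [hwtr, hPval]
      have h1 : (N.card : ℝ) * (1/2 - η/2) ≤ (Δ:ℝ) * (1/2 - η/2) :=
        mul_le_mul_of_nonneg_right hncardR h0
      have h2 : (Δ:ℝ) / 2 < (m₁:ℝ) := (hc1 m₁).mpr le_rfl
      rw [htdef]; linarith
    · have hr0 : r = 0 := by rw [hrdef]; exact ENNReal.ofReal_eq_zero.mpr (le_of_lt h0)
      have hP : P = 0 := by rw [hPdef, hr0]; rfl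
      have hz : ∀ ω : V → Bool,
          (if m₁ ≤ (N.filter fun u => ω u = true).card then f ω else 0) = 0 := by
        intro ω
        split_ifs with h
        · have hpos : 0 < (N.filter fun u => ω u = true).card := by omega
          obtain ⟨u, hu⟩ := Finset.card_pos.mp hpos
          rw [Finset.mem_filter] at hu
          apply Finset.prod_eq_zero (Finset.mem_univ u)
          rw [hu.2]
          show P = 0
          exact hP
        · rfl
      rw [Finset.sum_congr rfl fun ω _ => hz ω, Finset.sum_const, smul_zero]
      positivity
  set E : Set (V → Bool) := {ω : V → Bool |
          ((Δ : ℝ) / 2 < (((N).filter fun u => ω u = true).card : ℝ)) ∨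
          ((1 / 2 + η) * Δ < (((N).filter fun u => ω u = false).card : ℝ))} with hEdef
  rw [aux_measure_eq_sum r hp _ E]
  have hif : ∀ ω : V → Bool,
      0 ≤ (if m₁ ≤ (N.filter fun u => ω u = true).card then f ω else 0) := by
    intro ω; split_ifs; exacts [hf0 ω, le_rfl]
  have hif2 : ∀ ω : V → Bool,
      0 ≤ (if m₂ ≤ (N.filter fun u => ω u = false).card then f ω else 0) := by
    intro ω; split_ifs; exacts [hf0 ω, le_rfl]
  calc ∑ ω ∈ E.toFinset, ∏ u, (cond (ω u) r (1 - r)).toReal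
      = ∑ ω ∈ E.toFinset, f ω := Finset.sum_congr rfl fun ω _ => hterm ω
    _ ≤ ∑ ω ∈ E.toFinset, ((if m₁ ≤ (N.filter fun u => ω u = true).card then f ω else 0)
          + (if m₂ ≤ (N.filter fun u => ω u = false).card then f ω else 0)) := by
        apply Finset.sum_le_sum
        intro ω hmem
        rw [Set.mem_toFinset, hEdef, Set.mem_setOf_eq] at hmem
        rcases hmem with h | h
        · rw [if_pos ((hc1 _).mp h)]
          have := hif2 ω
          linarith
        · rw [if_pos ((hc2 _).mp h)]
          have := hif ω
          linarith
    _ ≤ ∑ ω : V → Bool, ((if m₁ ≤ (N.filter fun u => ω u = true).card then f ω else 0)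
          + (if m₂ ≤ (N.filter fun u => ω u = false).card then f ω else 0)) := by
        apply Finset.sum_le_sum_of_subset_of_nonneg (Finset.subset_univ _)
        intro ω _ _
        have := hif ω; have := hif2 ω
        linarith
    _ = (∑ ω : V → Bool, (if m₁ ≤ (N.filter fun u => ω u = true).card then f ω else 0))
        + (∑ ω : V → Bool, (if m₂ ≤ (N.filter fun u => ω u = false).card then f ω else 0)) :=
        Finset.sum_add_distrib
    _ ≤ Real.exp (-(2 * t ^ 2 / Δ)) + Real.exp (-(2 * t ^ 2 / Δ)) := add_le_add hE1 hE2
    _ = 2 / (Real.exp 2 * (Δ:ℝ) ^ 2) := by rw [hexpval]; ring
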